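/- arXiv:2501.16272 — 2 statements merged into one kernel-verified Lean document; each statement's English description precedes it below -/
import Mathlib

section
/- (Necessity of the restricted three-weight condition.) Let u, v, w be weights with u⁻¹w² and v locally integrable, and suppose the weighted dyadic square function S_w is bounded from L²(u) to L²(v) with norm ‖S_w‖. Then for every dyadic interval J, (w(J*)/w(J̃))² · ⟨u⁻¹w²⟩_J ⟨v⟩_J / ⟨w⟩_J² ≤ ‖S_w‖², where J* and J̃ are the sibling and parent of J. In particular (uw⁻¹, vw⁻¹) ∈ Ã₂^d(w). -/
open MeasureTheory Set Real ENNReal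

/-- The dyadic interval `[k·2^{-j}, (k+1)·2^{-j})`. -/
noncomputable def dI (k j : ℤ) : Set ℝ :=
  Set.Ico ((k : ℝ) * (2 : ℝ) ^ (-j)) (((k : ℝ) + 1) * (2 : ℝ) ^ (-j))

/-- Index of the dyadic sibling of `dI k j`. -/
def sib (k : ℤ) : ℤ := if k % 2 = 0 then k + 1 else k - 1

/-- The dyadic parent of `dI k j`. -/
noncomputable def dpar (k j : ℤ) : Set ℝ := dI (Int.fdiv k 2) (j - 1)

/-- The `w`-weighted average of `g` over the set `S`. -/
noncomputable def wavg (w g : ℝ → ℝ) (S : Set ℝ) : ℝ :=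
  (∫ x in S, g x * w x) / (∫ x in S, w x)

/-- The square of the weighted dyadic square function
`S_w f(x)² = ∑_{I dyadic} |⟨f⟩_I^w − ⟨f⟩_{Ĩ}^w|² 1_I(x)`, valued in `[0,∞]`. -/
noncomputable def SwSq (w f : ℝ → ℝ) (x : ℝ) : ℝ≥0∞ :=
  ∑' p : ℤ × ℤ,
    Set.indicator (dI p.1 p.2)
      (fun _ => ENNReal.ofReal ((wavg w f (dI p.1 p.2) - wavg w f (dpar p.1 p.2)) ^ 2)) x

lemma dpar_eq_union (k j : ℤ) : dpar k j = dI k j ∪ dI (sib k) j := by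
  have ht : (0:ℝ) < (2:ℝ)^(-j) := by positivity
  have h2 : ((2:ℝ))^(-(j-1)) = 2 * (2:ℝ)^(-j) := by
    rw [show -(j-1) = 1 + (-j) by ring, zpow_add₀ (by norm_num : (2:ℝ) ≠ 0)]
    norm_num
  have hm : Int.fdiv k 2 = k / 2 := Int.fdiv_eq_ediv_of_nonneg k (by norm_num)
  have hk := Int.mul_ediv_add_emod k 2
  rcases Int.emod_two_eq k with h | h
  · -- even : k = 2*(k/2)
    have hk2 : (k:ℝ) = 2 * ((k/2 : ℤ) : ℝ) := by
      rw [h, add_zero] at hk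
      exact_mod_cast hk.symm
    have hsib : sib k = k + 1 := by simp [sib, h]
    unfold dpar dI
    rw [hsib, hm, h2]
    push_cast
    rw [Set.Ico_union_Ico_eq_Ico (by nlinarith) (by nlinarith)]
    congr 1 <;> (rw [hk2]; ring)
  · have hk2 : (k:ℝ) = 2 * ((k/2 : ℤ) : ℝ) + 1 := by
      rw [h] at hk
      exact_mod_cast hk.symm
    have hsib : sib k = k - 1 := by simp [sib, h]
    unfold dpar dI
    rw [hsib, hm, h2, Set.union_comm]
    push_cast
    rw [show ((k:ℝ) - 1 + 1) * (2^(-j)) = (k:ℝ) * 2^(-j) by ring,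
      Set.Ico_union_Ico_eq_Ico (by nlinarith) (by nlinarith)]
    congr 1 <;> (rw [hk2]; ring)

lemma dI_disjoint_sib (k j : ℤ) : Disjoint (dI k j) (dI (sib k) j) := by
  have ht : (0:ℝ) < (2:ℝ)^(-j) := by positivity
  rw [Set.disjoint_left]
  intro x hx1 hx2
  simp only [dI, Set.mem_Ico] at hx1 hx2
  rcases Int.emod_two_eq k with h | h
  · have hsib : sib k = k + 1 := by simp [sib, h]
    rw [hsib] at hx2; push_cast at hx2
    nlinarith [hx1.2, hx2.1]
  · have hsib : sib k = k - 1 := by simp [sib, h]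
    rw [hsib] at hx2; push_cast at hx2
    nlinarith [hx1.1, hx2.2]

/-- Necessity of the restricted three-weight condition: if `S_w` is bounded from
`L²(u)` to `L²(v)` with norm `N`, then for every dyadic interval `J`,
`(w(J*)/w(J̃))² ⟨u⁻¹w²⟩_J ⟨v⟩_J / ⟨w⟩_J² ≤ N²`; i.e. `(uw⁻¹, vw⁻¹) ∈ Ã₂^d(w)`. -/
theorem restricted_condition_necessary (u v w : ℝ → ℝ) (N : ℝ) (hN : 0 ≤ N)
    (hu : ∀ᵐ x ∂(volume : Measure ℝ), 0 < u x)
    (hv : ∀ᵐ x ∂(volume : Measure ℝ), 0 < v x)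
    (hw : ∀ᵐ x ∂(volume : Measure ℝ), 0 < w x)
    (h1 : ∀ k j : ℤ, IntegrableOn (fun x => (u x)⁻¹ * (w x) ^ 2) (dI k j))
    (h2 : ∀ k j : ℤ, IntegrableOn v (dI k j))
    (h3 : ∀ k j : ℤ, IntegrableOn w (dI k j))
    (h4 : ∀ k j : ℤ, 0 < ∫ x in dI k j, w x)
    (hbound : ∀ f : ℝ → ℝ,
      (∫⁻ x, SwSq w f x * ENNReal.ofReal (v x)) ≤
        ENNReal.ofReal (N ^ 2) * ∫⁻ x, ENNReal.ofReal ((f x) ^ 2 * u x)) :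
    ∀ k j : ℤ,
      ((∫ x in dI (sib k) j, w x) / (∫ x in dpar k j, w x)) ^ 2 *
          ((∫ x in dI k j, (u x)⁻¹ * (w x) ^ 2) * (∫ x in dI k j, v x)) /
          (∫ x in dI k j, w x) ^ 2 ≤ N ^ 2 := by
  intro k j
  set J := dI k j with hJdef
  set Js := dI (sib k) j with hJsdef
  set Jp := dpar k j with hJpdef
  have mJ : MeasurableSet J := measurableSet_Ico
  have hsub : J ⊆ Jp := by rw [hJpdef, dpar_eq_union]; exact Set.subset_union_left
  set wJ := ∫ x in J, w x with hwJdef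
  set wS := ∫ x in Js, w x with hwSdef
  set wP := ∫ x in Jp, w x with hwPdef
  have hwJ : 0 < wJ := h4 k j
  have hwS : 0 < wS := h4 (sib k) j
  have hwP : wP = wJ + wS := by
    rw [hwPdef, hJpdef, dpar_eq_union]
    exact setIntegral_union (dI_disjoint_sib k j) measurableSet_Ico (h3 k j) (h3 (sib k) j)
  have hwPpos : 0 < wP := by rw [hwP]; linarith
  set B := ∫ x in J, (u x)⁻¹ * (w x) ^ 2 with hBdef
  set vJ := ∫ x in J, v x with hvJdef
  have huJ : ∀ᵐ x ∂(volume.restrict J), 0 < u x := ae_restrict_of_ae hu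
  have hB0 : 0 ≤ B := by
    refine setIntegral_nonneg_of_ae_restrict (huJ.mono fun x hx => ?_)
    positivity
  have hvJ0 : 0 ≤ vJ := by
    refine setIntegral_nonneg_of_ae_restrict ((ae_restrict_of_ae hv).mono fun x hx => le_of_lt hx)
  -- the test function
  set f : ℝ → ℝ := Set.indicator J (fun x => (u x)⁻¹ * w x) with hfdef
  -- ∫ over any set S ⊇-style: f·w
  have hfw : ∀ S : Set ℝ, (∫ x in S, f x * w x) = ∫ x in S ∩ J, (u x)⁻¹ * (w x)^2 := by
    intro S
    have : ∀ x, f x * w x = Set.indicator J (fun y => (u y)⁻¹ * (w y)^2) x := by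
      intro x
      by_cases hx : x ∈ J <;> simp [hfdef, Set.indicator_of_mem, Set.indicator_of_notMem, hx]
      ring
    simp_rw [this]
    exact setIntegral_indicator mJ
  have havgJ : wavg w f J = B / wJ := by
    rw [wavg, hfw, Set.inter_self, ← hBdef, ← hwJdef]
  have havgP : wavg w f Jp = B / wP := by
    rw [wavg, hfw, Set.inter_eq_right.mpr hsub, ← hBdef, ← hwPdef]
  set A := B / wJ - B / wP with hAdef
  -- RHS of hbound
  have hRHS : (∫⁻ x, ENNReal.ofReal ((f x) ^ 2 * u x)) = ENNReal.ofReal B := by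
    have hae : (fun x => ENNReal.ofReal ((f x)^2 * u x)) =ᵐ[volume]
        (fun x => Set.indicator J (fun y => ENNReal.ofReal ((u y)⁻¹ * (w y)^2)) x) := by
      refine hu.mono fun x hx => ?_
      by_cases hxJ : x ∈ J
      · simp only [hfdef, Set.indicator_of_mem hxJ]
        congr 1
        field_simp
      · simp [hfdef, Set.indicator_of_notMem hxJ]
    rw [lintegral_congr_ae hae, lintegral_indicator mJ,
      ← ofReal_integral_eq_lintegral_ofReal (h1 k j)
        (huJ.mono fun x hx => by positivity)]
  -- LHS lower bound
  have hLHS : ENNReal.ofReal (A^2) * ENNReal.ofReal vJ ≤ ∫⁻ x, SwSq w f x * ENNReal.ofReal (v x) := by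
    have hpt : ∀ x, Set.indicator J (fun _ => ENNReal.ofReal (A^2)) x * ENNReal.ofReal (v x)
        ≤ SwSq w f x * ENNReal.ofReal (v x) := by
      intro x
      refine mul_le_mul_left ?_ _
      by_cases hx : x ∈ J
      · rw [Set.indicator_of_mem hx]
        have := ENNReal.le_tsum (f := fun p : ℤ × ℤ =>
          Set.indicator (dI p.1 p.2)
            (fun _ => ENNReal.ofReal ((wavg w f (dI p.1 p.2) - wavg w f (dpar p.1 p.2)) ^ 2)) x)
          (k, j)
        rw [SwSq]
        refine le_trans (le_of_eq ?_) this
        rw [Set.indicator_of_mem hx]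
        rw [havgJ, havgP]
      · simp [Set.indicator_of_notMem hx]
    calc ENNReal.ofReal (A^2) * ENNReal.ofReal vJ
        = ∫⁻ x, Set.indicator J (fun _ => ENNReal.ofReal (A^2)) x * ENNReal.ofReal (v x) := by
          have : ∀ x, Set.indicator J (fun _ => ENNReal.ofReal (A^2)) x * ENNReal.ofReal (v x)
              = Set.indicator J (fun y => ENNReal.ofReal (A^2) * ENNReal.ofReal (v y)) x := by
            intro x
            by_cases hx : x ∈ J <;> simp [Set.indicator_of_mem, Set.indicator_of_notMem, hx]
          simp_rw [this]
          rw [lintegral_indicator mJ, lintegral_const_mul' _ _ ENNReal.ofReal_ne_top,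
            ← ofReal_integral_eq_lintegral_ofReal (h2 k j)
              ((ae_restrict_of_ae hv).mono fun x hx => le_of_lt hx)]
      _ ≤ ∫⁻ x, SwSq w f x * ENNReal.ofReal (v x) := lintegral_mono hpt
  -- combine
  have hmain : A^2 * vJ ≤ N^2 * B := by
    have := le_trans hLHS (le_trans (hbound f) (by rw [hRHS]))
    rw [← ENNReal.ofReal_mul (by positivity), ← ENNReal.ofReal_mul (by positivity)] at this
    exact (ENNReal.ofReal_le_ofReal_iff (by positivity)).mp this
  rcases eq_or_lt_of_le hB0 with hB | hB
  · rw [← hB]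
    simpa using (by positivity : (0:ℝ) ≤ N^2)
  · have hkey : ((wS / wP)^2 * (B * vJ) / wJ^2) * B ≤ N^2 * B := by
      refine le_trans (le_of_eq ?_) hmain
      rw [hAdef, hwP]
      field_simp
      ring
    exact le_of_mul_le_mul_right hkey hB
end

section
/- (The Q_J bound, Lemma 6 of the paper.) Let u, v, w be weights, w dyadic doubling with constant D(w), (uw, vw) ∈ A₂^d(w) with characteristic A, and suppose that for all dyadic J, (1/|J|)∑_{I∈D(J)} |I| |Δ_I w / ⟨w⟩_I|² ⟨u⁻¹⟩_I ≤ C ⟨u⁻¹⟩_J. Then Q_J(u,v,w) := (1/|J|)∑_{I∈D(J), I≠J} |Ĩ| (⟨u⁻¹⟩_I/⟨w⟩_I)² |1 − ⟨w⟩_I/⟨w⟩_{Ĩ}|² ⟨vw²⟩_{Ĩ} ≤ C' ⟨u⁻¹⟩_J, where C' depends only on D(w), A, and C. -/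
open MeasureTheory Set Real ENNReal

/-- Length of a dyadic interval of generation `j`. -/
noncomputable def len (j : ℤ) : ℝ := (2 : ℝ) ^ (-j)

/-- The Lebesgue average of `g` over `dI k j`. -/
noncomputable def lavg (g : ℝ → ℝ) (k j : ℤ) : ℝ := (∫ x in dI k j, g x) / len j

/-- The Lebesgue average of `g` over the parent of `dI k j`. -/
noncomputable def pavg (g : ℝ → ℝ) (k j : ℤ) : ℝ := (∫ x in dpar k j, g x) / len (j - 1)

/-- `Δ_I w = ⟨w⟩_{I⁺} − ⟨w⟩_{I⁻}` for `I = dI k j`. -/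
noncomputable def Δ (g : ℝ → ℝ) (k j : ℤ) : ℝ :=
  lavg g (2 * k + 1) (j + 1) - lavg g (2 * k) (j + 1)



lemma len_pos (j : ℤ) : 0 < len j := zpow_pos two_pos _

lemma two_zpow_succ (j : ℤ) : (2:ℝ)^(-(j-1)) = 2 * (2:ℝ)^(-j) := by
  rw [← zpow_one_add₀ (two_ne_zero (α := ℝ))]; congr 1; ring

lemma len_succ (j : ℤ) : len (j - 1) = 2 * len j := two_zpow_succ j

lemma dI_union (m j : ℤ) : dI (2*m) j ∪ dI (2*m+1) j = dI m (j-1) := by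
  unfold dI
  have tpos : (0:ℝ) < (2:ℝ)^(-j) := zpow_pos two_pos _
  have hmid : ((2*m:ℤ):ℝ) + 1 = ((2*m+1:ℤ):ℝ) := by push_cast; ring
  rw [hmid, Set.Ico_union_Ico_eq_Ico (by push_cast; nlinarith) (by push_cast; nlinarith)]
  rw [two_zpow_succ]
  congr 1 <;> push_cast <;> ring

lemma dI_disjoint (m j : ℤ) : Disjoint (dI (2*m) j) (dI (2*m+1) j) := by
  unfold dI
  have h : (((2*m : ℤ) : ℝ) + 1) * (2:ℝ)^(-j) = ((2*m+1 : ℤ) : ℝ) * (2:ℝ)^(-j) := by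
    push_cast; ring
  rw [h]
  exact Set.Ico_disjoint_Ico_same

lemma dI_meas (k j : ℤ) : MeasurableSet (dI k j) := measurableSet_Ico

lemma dI_vol (k j : ℤ) : volume (dI k j) = ENNReal.ofReal (len j) := by
  unfold dI len
  rw [Real.volume_Ico]
  congr 1
  ring

lemma pavg_eq (g : ℝ → ℝ) (k j : ℤ) : pavg g k j = lavg g (k.fdiv 2) (j-1) := rfl

lemma child_eq (k : ℤ) : k = 2 * k.fdiv 2 ∨ k = 2 * k.fdiv 2 + 1 := by
  have h := Int.mul_fdiv_add_fmod k 2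
  have h2 : k.fmod 2 = 0 ∨ k.fmod 2 = 1 := by
    have := Int.fmod_nonneg_of_pos k (b:=2) (by norm_num)
    have := Int.fmod_lt_of_pos k (b:=2) (by norm_num)
    omega
  omega

lemma integral_split (g : ℝ → ℝ) (hint : ∀ k j : ℤ, IntegrableOn g (dI k j)) (m j : ℤ) :
    ∫ x in dI m (j-1), g x = (∫ x in dI (2*m) j, g x) + ∫ x in dI (2*m+1) j, g x := by
  rw [← dI_union m j, setIntegral_union (dI_disjoint m j) (dI_meas _ _) (hint _ _) (hint _ _)]

lemma integral_inv_pos {u : ℝ → ℝ} (hu : ∀ᵐ x ∂(volume : Measure ℝ), 0 < u x)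
    (hint : ∀ k j : ℤ, IntegrableOn (fun x => (u x)⁻¹) (dI k j)) (k j : ℤ) :
    0 < ∫ x in dI k j, (u x)⁻¹ := by
  set μ := (volume : Measure ℝ).restrict (dI k j)
  have hnn : 0 ≤ᵐ[μ] fun x => (u x)⁻¹ :=
    ae_restrict_of_ae (hu.mono fun x hx => le_of_lt (by positivity))
  rw [integral_pos_iff_support_of_nonneg_ae hnn (hint k j)]
  have hsup : ∀ᵐ x ∂μ, x ∈ Function.support fun x => (u x)⁻¹ :=
    ae_restrict_of_ae (hu.mono fun x hx => by
      simp only [Function.mem_support]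
      positivity)
  have : μ (Function.support fun x => (u x)⁻¹) = μ Set.univ := by
    apply measure_congr
    rw [Filter.eventuallyEq_univ]
    exact hsup
  rw [this, Measure.restrict_apply_univ, dI_vol]
  have h2 := zpow_pos (two_pos (α := ℝ)) (-j)
  rw [ENNReal.ofReal_pos]
  exact len_pos j

lemma sq_identity {x y z t : ℝ} (hz : z ≠ 0) (hrel : 2*z = x + y) (ht : t = x ∨ t = y) :
    (1 - t/z)^2 = ((y - x)/(2*z))^2 := by
  have hy : y = 2*z - x := by linarith
  subst hy
  rcases ht with rfl | rfl
  · field_simp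
    ring
  · field_simp
    ring

lemma per_term (D A : ℝ) (hD : 1 ≤ D) (hA0 : 0 ≤ A) (u v w : ℝ → ℝ)
    (hu : ∀ᵐ x ∂(volume : Measure ℝ), 0 < u x)
    (hv : ∀ᵐ x ∂(volume : Measure ℝ), 0 < v x)
    (hwint : ∀ k j : ℤ, IntegrableOn w (dI k j))
    (huint : ∀ k j : ℤ, IntegrableOn (fun x => (u x)⁻¹) (dI k j))
    (hwpos : ∀ k j : ℤ, 0 < ∫ x in dI k j, w x)
    (hdoub : ∀ k j : ℤ, (∫ x in dpar k j, w x) ≤ D * ∫ x in dI k j, w x)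
    (hA2 : ∀ k j : ℤ,
      lavg (fun x => (u x)⁻¹) k j * lavg (fun x => v x * (w x) ^ 2) k j ≤
        A * (lavg w k j) ^ 2)
    (k j : ℤ) :
    len (j - 1) * (lavg (fun x => (u x)⁻¹) k j / lavg w k j) ^ 2 *
        (1 - lavg w k j / pavg w k j) ^ 2 * pavg (fun x => v x * (w x) ^ 2) k j ≤
      (A * D ^ 2 / 4) * (len (j-1) *
        (Δ w (k.fdiv 2) (j - 1) / lavg w (k.fdiv 2) (j-1)) ^ 2 *
        lavg (fun x => (u x)⁻¹) (k.fdiv 2) (j-1)) := by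
  set m := k.fdiv 2 with hm
  set aI := lavg (fun x => (u x)⁻¹) k j with haI
  set wI := lavg w k j with hwI
  set wP := lavg w m (j-1) with hwP
  set aP := lavg (fun x => (u x)⁻¹) m (j-1) with haP
  set bP := lavg (fun x => v x * (w x) ^ 2) m (j-1) with hbP
  set wL := lavg w (2*m) j with hwL
  set wR := lavg w (2*m+1) j with hwR
  rw [pavg_eq, pavg_eq, ← hwP, ← hbP]
  have lenj := len_pos j
  have lenP := len_pos (j-1)
  -- positivity
  have hwIpos : 0 < wI := div_pos (hwpos k j) lenj
  have hwPpos : 0 < wP := div_pos (hwpos m (j-1)) lenP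
  have haIpos : 0 < aI := div_pos (integral_inv_pos hu huint k j) lenj
  have haPpos : 0 < aP := div_pos (integral_inv_pos hu huint m (j-1)) lenP
  have hbPnn : 0 ≤ bP := by
    apply div_nonneg _ lenP.le
    apply setIntegral_nonneg_of_ae
    filter_upwards [hv] with x hx
    positivity
  -- delta identity
  have hdelta : Δ w m (j-1) = wR - wL := by
    rw [Δ]
    have h1 : j - 1 + 1 = j := by ring
    rw [h1]
  have h2wp : 2 * wP = wL + wR := by
    rw [hwP, hwL, hwR, lavg, lavg, lavg, integral_split w hwint m j, len_succ]
    field_simp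
  have hchild : wI = wL ∨ wI = wR := by
    rcases child_eq k with h | h
    · left; rw [hwI, hwL, ← h]
    · right; rw [hwI, hwR, ← h]
  have hsq : (1 - wI / wP) ^ 2 = ((wR - wL) / (2 * wP)) ^ 2 :=
    sq_identity hwPpos.ne' h2wp hchild
  -- aI ≤ 2 aP
  have hIsubP : dI k j ⊆ dI m (j-1) := by
    rw [← dI_union m j]
    rcases child_eq k with h | h
    · rw [h]; exact Set.subset_union_left
    · rw [h]; exact Set.subset_union_right
  have haI2 : aI ≤ 2 * aP := by
    have hmono : (∫ x in dI k j, (u x)⁻¹) ≤ ∫ x in dI m (j-1), (u x)⁻¹ := by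
      apply setIntegral_mono_set (huint m (j-1))
      · exact ae_restrict_of_ae (hu.mono fun x hx => le_of_lt (by positivity))
      · exact Filter.Eventually.of_forall hIsubP
    rw [haI, haP, lavg, lavg, len_succ]
    rw [div_le_iff₀ lenj]
    have : 2 * ((∫ x in dI m (j-1), (u x)⁻¹) / (2 * len j)) * len j
        = ∫ x in dI m (j-1), (u x)⁻¹ := by field_simp
    rw [this]
    exact hmono
  -- doubling: 2 wP ≤ D wI
  have hdoub' : 2 * wP ≤ D * wI := by
    have h := hdoub k j
    rw [show dpar k j = dI m (j-1) from rfl] at h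
    rw [hwP, hwI, lavg, lavg, len_succ]
    have e1 : 2 * ((∫ x in dI m (j-1), w x) / (2 * len j)) = (∫ x in dI m (j-1), w x) / len j := by
      field_simp
    rw [e1, ← mul_div_assoc]
    gcongr
  have hA2P : aP * bP ≤ A * wP ^ 2 := hA2 m (j-1)
  -- main chain
  rw [hsq, hdelta]
  have hratio : aI / wI ≤ D * aP / wP := by
    rw [div_le_div_iff₀ hwIpos hwPpos]
    nlinarith
  have step1 : len (j-1) * (aI / wI) ^ 2 * ((wR - wL) / (2*wP)) ^ 2 * bP
      ≤ len (j-1) * (D * aP / wP) ^ 2 * ((wR - wL) / (2*wP)) ^ 2 * bP := by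
    gcongr <;> positivity
  have step2 : len (j-1) * (D * aP / wP) ^ 2 * ((wR - wL) / (2*wP)) ^ 2 * bP
      = (D^2/4) * (len (j-1) * ((wR - wL)/wP)^2) * (aP * bP) * (aP / wP^2) := by
    field_simp
    ring
  have step3 : (D^2/4) * (len (j-1) * ((wR - wL)/wP)^2) * (aP * bP) * (aP / wP^2)
      ≤ (D^2/4) * (len (j-1) * ((wR - wL)/wP)^2) * (A * wP^2) * (aP / wP^2) := by
    gcongr <;> positivity
  have step4 : (D^2/4) * (len (j-1) * ((wR - wL)/wP)^2) * (A * wP^2) * (aP / wP^2)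
      = (A * D^2/4) * (len (j-1) * ((wR - wL)/wP)^2 * aP) := by
    field_simp
  calc len (j-1) * (aI / wI) ^ 2 * ((wR - wL) / (2*wP)) ^ 2 * bP
      ≤ len (j-1) * (D * aP / wP) ^ 2 * ((wR - wL) / (2*wP)) ^ 2 * bP := step1
    _ = (D^2/4) * (len (j-1) * ((wR - wL)/wP)^2) * (aP * bP) * (aP / wP^2) := step2
    _ ≤ (D^2/4) * (len (j-1) * ((wR - wL)/wP)^2) * (A * wP^2) * (aP / wP^2) := step3
    _ = (A * D^2/4) * (len (j-1) * ((wR - wL)/wP)^2 * aP) := step4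

lemma dI_subset_iff {k j k₀ j₀ : ℤ} :
    dI k j ⊆ dI k₀ j₀ ↔ (k₀ : ℝ) * (2:ℝ)^(-j₀) ≤ (k:ℝ) * (2:ℝ)^(-j) ∧
      ((k:ℝ)+1) * (2:ℝ)^(-j) ≤ ((k₀:ℝ)+1) * (2:ℝ)^(-j₀) := by
  unfold dI
  rw [Set.Ico_subset_Ico_iff]
  nlinarith [zpow_pos (two_pos (α := ℝ)) (-j)]

lemma dpar_subset {k j k₀ j₀ : ℤ} (h : dI k j ⊂ dI k₀ j₀) : dpar k j ⊆ dI k₀ j₀ := by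
  obtain ⟨h1, h2⟩ := dI_subset_iff.1 h.subset
  have tpos : (0:ℝ) < (2:ℝ)^(-j) := zpow_pos two_pos _
  have t0pos : (0:ℝ) < (2:ℝ)^(-j₀) := zpow_pos two_pos _
  -- j₀ ≤ j
  have hle : j₀ ≤ j := by
    have : (2:ℝ)^(-j) ≤ (2:ℝ)^(-j₀) := by nlinarith
    have := (zpow_le_zpow_iff_right₀ (one_lt_two (α := ℝ))).1 this
    omega
  have hne : j ≠ j₀ := by
    intro hjj
    subst hjj
    have hk1 : (k₀:ℝ) ≤ k := le_of_mul_le_mul_right (by linarith) tpos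
    have hk2 : (k:ℝ) ≤ k₀ := le_of_mul_le_mul_right (by linarith) tpos
    have : (k₀:ℝ) = k := le_antisymm hk1 hk2
    have : k₀ = k := by exact_mod_cast this
    exact h.ne (by rw [this])
  have hlt : j₀ + 1 ≤ j := by omega
  set f : ℤ := 2 ^ (j - j₀ - 1).toNat with hf
  have hf1 : 1 ≤ f := one_le_pow₀ (by norm_num)
  have hkey : (2:ℝ)^(-j₀) = (2:ℝ) * (f:ℝ) * (2:ℝ)^(-j) := by
    have : (2:ℝ) * (f:ℝ) = (2:ℝ)^(j - j₀) := by
      push_cast [hf]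
      rw [← zpow_natCast (2:ℝ), ← zpow_one_add₀ (two_ne_zero (α := ℝ))]
      congr 1
      omega
    rw [this, ← zpow_add₀ (two_ne_zero (α := ℝ))]
    congr 1
    ring
  rw [hkey] at h1 h2
  -- integer inequalities
  have hA : 2 * (k₀ * f) ≤ k := by
    have : (2 * (k₀ * f) : ℝ) ≤ (k : ℝ) := le_of_mul_le_mul_right (by nlinarith) tpos
    exact_mod_cast this
  have hB : k + 1 ≤ 2 * (k₀ * f) + 2 * f := by
    have : ((k:ℝ) + 1) ≤ (2 * (k₀ * f) + 2 * f : ℝ) := le_of_mul_le_mul_right (by nlinarith) tpos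
    exact_mod_cast this
  -- goals at the parent level
  set m : ℤ := k.fdiv 2 with hm
  have hc := child_eq k
  have g1 : 2 * (k₀ * f) ≤ 2 * m := by omega
  have g2 : 2 * m + 2 ≤ 2 * (k₀ * f) + 2 * f := by omega
  show dI m (j-1) ⊆ dI k₀ j₀
  rw [dI_subset_iff]
  have hpar : (2:ℝ)^(-(j-1)) = 2 * (2:ℝ)^(-j) := by
    rw [← zpow_one_add₀ (two_ne_zero (α := ℝ))]
    congr 1
    ring
  rw [hkey, hpar]
  constructor
  · have : ((2 * (k₀ * f) : ℤ) : ℝ) ≤ ((2 * m : ℤ) : ℝ) := by exact_mod_cast g1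
    push_cast at this ⊢
    nlinarith
  · have : ((2 * m + 2 : ℤ) : ℝ) ≤ ((2 * (k₀ * f) + 2 * f : ℤ) : ℝ) := by exact_mod_cast g2
    push_cast at this ⊢
    nlinarith

/-- The `Q_J` bound (Lemma 6 of the paper): for `w` dyadic doubling with constant `D`,
`(uw,vw) ∈ A₂^d(w)` with characteristic `A` (in the equivalent Lebesgue-average form),
and the `u⁻¹`-Carleson condition for `{|I||Δ_I w/⟨w⟩_I|²}`, the quantity `Q_J(u,v,w)`
is bounded by `C'·⟨u⁻¹⟩_J` with `C'` depending only on `D`, `A`, `C`. -/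
theorem QJ_bound (D A C : ℝ) (hD : 1 ≤ D) (hA : 0 ≤ A) (hC : 0 ≤ C) :
    ∃ C' : ℝ, 0 ≤ C' ∧
      ∀ u v w : ℝ → ℝ,
        (∀ᵐ x ∂(volume : Measure ℝ), 0 < u x) →
        (∀ᵐ x ∂(volume : Measure ℝ), 0 < v x) →
        (∀ᵐ x ∂(volume : Measure ℝ), 0 < w x) →
        (∀ k j : ℤ, IntegrableOn w (dI k j)) →
        (∀ k j : ℤ, IntegrableOn (fun x => (u x)⁻¹) (dI k j)) →
        (∀ k j : ℤ, IntegrableOn (fun x => v x * (w x) ^ 2) (dI k j)) →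
        (∀ k j : ℤ, 0 < ∫ x in dI k j, w x) →
        -- dyadic doubling with constant `D`
        (∀ k j : ℤ, (∫ x in dpar k j, w x) ≤ D * ∫ x in dI k j, w x) →
        -- joint `A₂` condition with characteristic `A`
        (∀ k j : ℤ,
          lavg (fun x => (u x)⁻¹) k j * lavg (fun x => v x * (w x) ^ 2) k j ≤
            A * (lavg w k j) ^ 2) →
        -- `u⁻¹`-Carleson condition with constant `C`
        (∀ k₀ j₀ : ℤ,
          (∑' p : {p : ℤ × ℤ // dI p.1 p.2 ⊆ dI k₀ j₀},
            ENNReal.ofReal (len p.1.2 * (Δ w p.1.1 p.1.2 / lavg w p.1.1 p.1.2) ^ 2 *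
              lavg (fun x => (u x)⁻¹) p.1.1 p.1.2)) ≤
            ENNReal.ofReal (C * len j₀ * lavg (fun x => (u x)⁻¹) k₀ j₀)) →
        -- conclusion: the `Q_J` bound
        ∀ k₀ j₀ : ℤ,
          (∑' p : {p : ℤ × ℤ // dI p.1 p.2 ⊂ dI k₀ j₀},
            ENNReal.ofReal (len (p.1.2 - 1) *
              (lavg (fun x => (u x)⁻¹) p.1.1 p.1.2 / lavg w p.1.1 p.1.2) ^ 2 *
              (1 - lavg w p.1.1 p.1.2 / pavg w p.1.1 p.1.2) ^ 2 *
              pavg (fun x => v x * (w x) ^ 2) p.1.1 p.1.2)) ≤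
            ENNReal.ofReal (C' * len j₀ * lavg (fun x => (u x)⁻¹) k₀ j₀) := by
  refine ⟨A * D ^ 2 * C / 2, by positivity, ?_⟩
  intro u v w hu hv hw hwint huint hvint hwpos hdoub hA2 hCar k₀ j₀
  set carl : ℤ × ℤ → ℝ := fun q => len q.2 * (Δ w q.1 q.2 / lavg w q.1 q.2) ^ 2 *
    lavg (fun x => (u x)⁻¹) q.1 q.2 with hcarl
  have hcarl_nn : ∀ q : ℤ × ℤ, 0 ≤ carl q := by
    intro q
    have h1 : 0 ≤ lavg (fun x => (u x)⁻¹) q.1 q.2 :=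
      (div_pos (integral_inv_pos hu huint q.1 q.2) (len_pos q.2)).le
    have h2 : 0 ≤ len q.2 := (len_pos q.2).le
    rw [hcarl]
    positivity
  set Φ : {p : ℤ × ℤ // dI p.1 p.2 ⊂ dI k₀ j₀} →
      {p : ℤ × ℤ // dI p.1 p.2 ⊆ dI k₀ j₀} × Bool :=
    fun p => (⟨(p.1.1.fdiv 2, p.1.2 - 1), dpar_subset p.2⟩, decide (p.1.1.fmod 2 = 0))
    with hPhi
  have hinj : Function.Injective Φ := by
    rintro ⟨⟨k1, j1⟩, h1⟩ ⟨⟨k2, j2⟩, h2⟩ h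
    simp only [hPhi, Prod.mk.injEq, Subtype.ext_iff] at h
    obtain ⟨⟨hm, hj⟩, hb⟩ := h
    rw [decide_eq_decide] at hb
    have e1 := Int.mul_fdiv_add_fmod k1 2
    have e2 := Int.mul_fdiv_add_fmod k2 2
    have f1a := Int.fmod_nonneg_of_pos k1 (b := 2) (by norm_num)
    have f1b := Int.fmod_lt_of_pos k1 (b := 2) (by norm_num)
    have f2a := Int.fmod_nonneg_of_pos k2 (b := 2) (by norm_num)
    have f2b := Int.fmod_lt_of_pos k2 (b := 2) (by norm_num)
    simp only [Subtype.mk.injEq, Prod.mk.injEq]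
    omega
  have key : ∀ p : {p : ℤ × ℤ // dI p.1 p.2 ⊂ dI k₀ j₀},
      ENNReal.ofReal (len (p.1.2 - 1) *
          (lavg (fun x => (u x)⁻¹) p.1.1 p.1.2 / lavg w p.1.1 p.1.2) ^ 2 *
          (1 - lavg w p.1.1 p.1.2 / pavg w p.1.1 p.1.2) ^ 2 *
          pavg (fun x => v x * (w x) ^ 2) p.1.1 p.1.2) ≤
        ENNReal.ofReal (A * D ^ 2 / 4) * ENNReal.ofReal (carl ((Φ p).1.1)) := by
    intro p
    rw [← ENNReal.ofReal_mul (by positivity)]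
    apply ENNReal.ofReal_le_ofReal
    exact per_term D A hD hA u v w hu hv hwint huint hwpos hdoub hA2 p.1.1 p.1.2
  calc (∑' p : {p : ℤ × ℤ // dI p.1 p.2 ⊂ dI k₀ j₀},
          ENNReal.ofReal (len (p.1.2 - 1) *
            (lavg (fun x => (u x)⁻¹) p.1.1 p.1.2 / lavg w p.1.1 p.1.2) ^ 2 *
            (1 - lavg w p.1.1 p.1.2 / pavg w p.1.1 p.1.2) ^ 2 *
            pavg (fun x => v x * (w x) ^ 2) p.1.1 p.1.2))
      ≤ ∑' p : {p : ℤ × ℤ // dI p.1 p.2 ⊂ dI k₀ j₀},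
          ENNReal.ofReal (A * D ^ 2 / 4) * ENNReal.ofReal (carl ((Φ p).1.1)) :=
        ENNReal.tsum_le_tsum key
    _ = ENNReal.ofReal (A * D ^ 2 / 4) *
          ∑' p : {p : ℤ × ℤ // dI p.1 p.2 ⊂ dI k₀ j₀},
            ENNReal.ofReal (carl ((Φ p).1.1)) := ENNReal.tsum_mul_left
    _ ≤ ENNReal.ofReal (A * D ^ 2 / 4) *
          ∑' x : {p : ℤ × ℤ // dI p.1 p.2 ⊆ dI k₀ j₀} × Bool,
            ENNReal.ofReal (carl (x.1.1)) := by
        gcongr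
        exact tsum_comp_le_tsum_of_injective hinj (fun x => ENNReal.ofReal (carl (x.1.1)))
    _ = ENNReal.ofReal (A * D ^ 2 / 4) *
          (2 * ∑' t : {p : ℤ × ℤ // dI p.1 p.2 ⊆ dI k₀ j₀},
            ENNReal.ofReal (carl t.1)) := by
        congr 1
        have h1 : (∑' x : {p : ℤ × ℤ // dI p.1 p.2 ⊆ dI k₀ j₀} × Bool,
            ENNReal.ofReal (carl (x.1.1)))
            = ∑' (t : {p : ℤ × ℤ // dI p.1 p.2 ⊆ dI k₀ j₀}) (_b : Bool),
                ENNReal.ofReal (carl t.1) :=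
          ENNReal.tsum_prod (f := fun (a : {p : ℤ × ℤ // dI p.1 p.2 ⊆ dI k₀ j₀}) (_ : Bool) => ENNReal.ofReal (carl a.1))
        rw [h1]
        have h2 : ∀ t : {p : ℤ × ℤ // dI p.1 p.2 ⊆ dI k₀ j₀},
            (∑' _b : Bool, ENNReal.ofReal (carl t.1)) = 2 * ENNReal.ofReal (carl t.1) :=
          fun t => by rw [tsum_bool, two_mul]
        rw [tsum_congr h2, ENNReal.tsum_mul_left]
    _ ≤ ENNReal.ofReal (A * D ^ 2 / 4) *
          (2 * ENNReal.ofReal (C * len j₀ * lavg (fun x => (u x)⁻¹) k₀ j₀)) := by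
        gcongr
        exact hCar k₀ j₀
    _ = ENNReal.ofReal (A * D ^ 2 * C / 2 * len j₀ * lavg (fun x => (u x)⁻¹) k₀ j₀) := by
        rw [show (2 : ℝ≥0∞) = ENNReal.ofReal 2 by simp]
        rw [← ENNReal.ofReal_mul (by norm_num), ← ENNReal.ofReal_mul (by positivity)]
        congr 1
        ring
end
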